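/- (Single-coordinate mixing lemma.) Fix integers d ≥ 1 and M ≥ 3 with M odd, and let P be the lifted Markov chain on C×V = (Fin d × {+1,−1}) × (ZMod M)^d with parameter α = 1/(2dM). Let the initial distribution p₀ be concentrated on a single lifted state ((k,s),v) ∈ C×V. Then for every n ∈ ZMod M, the distribution p_{2M} = P^{2M} p₀ satisfies ∑_{(c,w) ∈ C×V : w_k = n} p_{2M}(c,w) ≥ 1/(16·d·M); that is, after 2M steps the k-th coordinate is uniformly mixed up to a factor 1/(16d). -/

import Mathlib

open Finset

/-- `p` is a probability distribution on the finite set `S`. -/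
def IsProbDist {S : Type*} [Fintype S] (p : S → ℝ) : Prop :=
  (∀ s, 0 ≤ p s) ∧ ∑ s, p s = 1

/-- Total variation distance `‖p - q‖_TV = (1/2) ∑_s |p s - q s|`. -/
noncomputable def tvDist {S : Type*} [Fintype S] (p q : S → ℝ) : ℝ :=
  (1/2) * ∑ s, |p s - q s|

/-- Action of a matrix on a distribution: `(P p)(s') = ∑_s P s' s * p s`. -/
def matVec {S : Type*} [Fintype S] (P : S → S → ℝ) (p : S → ℝ) : S → ℝ :=
  fun s' => ∑ s, P s' s * p s

/-- The coin set `C = Fin d × {+1,−1}` (a coordinate axis and a direction). -/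
abbrev TorusCoin (d : ℕ) := Fin d × ℤˣ

/-- The `d`-dimensional discrete torus of side `M`. -/
abbrev Torus (d M : ℕ) := Fin d → ZMod M

/-- The coin-toss matrix `S̄` on `C`: `S̄(c',c) = 1 − (2d−1)α` if `c' = c`, else `α`. -/
noncomputable def coinToss (d : ℕ) (α : ℝ) : TorusCoin d → TorusCoin d → ℝ :=
  fun c' c => if c' = c then 1 - (2*(d : ℝ) - 1)*α else α

/-- The lifted Markov chain transition matrix on `C × V`:
`P(((k',s'),v'),((k,s),v)) = S̄((k',s'),(k,s))` if `v' = v + s'·e_{k'}`, else `0`. -/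
noncomputable def torusP (d M : ℕ) (α : ℝ) :
    (TorusCoin d × Torus d M) → (TorusCoin d × Torus d M) → ℝ :=
  fun x' x =>
    if x'.2 = x.2 + (fun j => if j = x'.1.1 then ((x'.1.2 : ℤ) : ZMod M) else 0)
    then coinToss d α x'.1 x.1 else 0

/-! ### Auxiliary development for the single-coordinate mixing lemma -/

namespace TorusMixAux

/-- direction vector of a coin -/
def dirv (d M : ℕ) (c : TorusCoin d) : Torus d M :=
  fun j => if j = c.1 then ((c.2 : ℤ) : ZMod M) else 0

theorem torusP_eq (d M : ℕ) (α : ℝ) (x' x : TorusCoin d × Torus d M) :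
    torusP d M α x' x =
      if x'.2 = x.2 + dirv d M x'.1 then coinToss d α x'.1 x.1 else 0 := rfl

theorem dirv_neg (d M : ℕ) (k : Fin d) (s : ℤˣ) :
    dirv d M (k, -s) = - dirv d M (k, s) := by
  funext j
  simp only [dirv, Pi.neg_apply]
  split_ifs <;> simp

theorem units_ne_neg (s : ℤˣ) : s ≠ -s := by
  rcases Int.units_eq_one_or s with h | h <;> simp [h]

theorem coin_ne (d : ℕ) (k : Fin d) (s : ℤˣ) :
    ((k, s) : TorusCoin d) ≠ (k, -s) :=
  fun h => units_ne_neg s (congrArg Prod.snd h)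

/-- state after `t` initial "stay" steps -/
def stayS (d M : ℕ) (k : Fin d) (s : ℤˣ) (v : Torus d M) (t : ℕ) :
    TorusCoin d × Torus d M :=
  ((k, s), v + (t : ℤ) • dirv d M (k, s))

/-- state after `a` "stay" steps, one flip, then `t - a` reversed steps -/
def flipS (d M : ℕ) (k : Fin d) (s : ℤˣ) (v : Torus d M) (t a : ℕ) :
    TorusCoin d × Torus d M :=
  ((k, -s), v + (2 * (a : ℤ) - (t : ℤ)) • dirv d M (k, s))

theorem stay_ne_flip (d M : ℕ) (k : Fin d) (s : ℤˣ) (v : Torus d M) (t t' a : ℕ) :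
    stayS d M k s v t ≠ flipS d M k s v t' a :=
  fun h => coin_ne d k s (congrArg Prod.fst h)

/-- The sub-solution: mass along trajectories with at most one coin flip. -/
noncomputable def gfun (d M : ℕ) (k : Fin d) (s : ℤˣ) (v : Torus d M) (α : ℝ)
    (t : ℕ) (x : TorusCoin d × Torus d M) : ℝ :=
  (1 - (2*(d:ℝ)-1)*α)^t * (if x = stayS d M k s v t then 1 else 0) +
  α * (1 - (2*(d:ℝ)-1)*α)^(t-1) *
    ∑ a ∈ Finset.range t, (if x = flipS d M k s v t a then 1 else 0)

theorem torusP_nonneg (d M : ℕ) {α : ℝ} (hα : 0 ≤ α)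
    (hβ : 0 ≤ 1 - (2*(d:ℝ)-1)*α) (x' x : TorusCoin d × Torus d M) :
    0 ≤ torusP d M α x' x := by
  rw [torusP_eq]
  split_ifs with h
  · unfold coinToss
    split_ifs <;> assumption
  · exact le_refl 0

theorem coinToss_same (d : ℕ) (α : ℝ) (c : TorusCoin d) :
    coinToss d α c c = 1 - (2*(d:ℝ)-1)*α := if_pos rfl

theorem coinToss_ne (d : ℕ) (α : ℝ) {c' c : TorusCoin d} (h : c' ≠ c) :
    coinToss d α c' c = α := if_neg h

theorem sum_mul_ind {X : Type*} [Fintype X] [DecidableEq X] (f : X → ℝ) (y : X) :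
    ∑ x, f x * (if x = y then (1:ℝ) else 0) = f y := by
  simp [mul_ite, Finset.sum_ite_eq']

theorem sum_P_g (d M : ℕ) [NeZero M] (k : Fin d) (s : ℤˣ) (v : Torus d M) (α : ℝ)
    (t : ℕ) (x' : TorusCoin d × Torus d M) :
    ∑ x, torusP d M α x' x * gfun d M k s v α t x
      = (1 - (2*(d:ℝ)-1)*α)^t * torusP d M α x' (stayS d M k s v t)
        + α * (1 - (2*(d:ℝ)-1)*α)^(t-1) *
            ∑ a ∈ Finset.range t, torusP d M α x' (flipS d M k s v t a) := by
  set β : ℝ := 1 - (2*(d:ℝ)-1)*α with hβ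
  have h1 : ∀ x : TorusCoin d × Torus d M,
      torusP d M α x' x * gfun d M k s v α t x
        = β^t * (torusP d M α x' x * (if x = stayS d M k s v t then 1 else 0))
          + (α * β^(t-1)) *
            ∑ a ∈ Finset.range t,
              torusP d M α x' x * (if x = flipS d M k s v t a then 1 else 0) := by
    intro x
    rw [← Finset.mul_sum]
    simp only [gfun]
    ring
  rw [Finset.sum_congr rfl fun x _ => h1 x, Finset.sum_add_distrib,
    ← Finset.mul_sum, ← Finset.mul_sum,
    sum_mul_ind (fun x => torusP d M α x' x) (stayS d M k s v t),
    Finset.sum_comm]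
  congr 1
  congr 1
  exact Finset.sum_congr rfl fun a _ =>
    sum_mul_ind (fun x => torusP d M α x' x) (flipS d M k s v t a)

theorem P_stay_bound (d M : ℕ) [NeZero M] (k : Fin d) (s : ℤˣ) (v : Torus d M)
    {α : ℝ} (hα : 0 ≤ α) (hβ : 0 ≤ 1 - (2*(d:ℝ)-1)*α) (t : ℕ)
    (x' : TorusCoin d × Torus d M) :
    (1 - (2*(d:ℝ)-1)*α) * (if x' = stayS d M k s v (t+1) then 1 else 0)
      + α * (if x' = flipS d M k s v (t+1) t then 1 else 0)
    ≤ torusP d M α x' (stayS d M k s v t) := by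
  by_cases h1 : x' = stayS d M k s v (t+1)
  · subst h1
    rw [if_pos rfl, if_neg (stay_ne_flip d M k s v (t+1) (t+1) t), torusP_eq]
    have hpos : (stayS d M k s v (t+1)).2
        = (stayS d M k s v t).2 + dirv d M (stayS d M k s v (t+1)).1 := by
      show v + ((t+1 : ℕ) : ℤ) • dirv d M (k,s)
          = (v + (t : ℤ) • dirv d M (k,s)) + dirv d M (k,s)
      push_cast
      module
    rw [if_pos hpos]
    refine le_of_eq ?_
    show (1 - (2*(d:ℝ)-1)*α) * 1 + α * 0 = coinToss d α (k, s) (k, s)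
    rw [coinToss_same]
    ring
  · rw [if_neg h1, mul_zero, zero_add]
    by_cases h2 : x' = flipS d M k s v (t+1) t
    · subst h2
      rw [if_pos rfl, mul_one, torusP_eq]
      have hpos : (flipS d M k s v (t+1) t).2
          = (stayS d M k s v t).2 + dirv d M (flipS d M k s v (t+1) t).1 := by
        show v + (2 * (t : ℤ) - ((t+1 : ℕ) : ℤ)) • dirv d M (k,s)
            = (v + (t : ℤ) • dirv d M (k,s)) + dirv d M (k, -s)
        rw [dirv_neg]
        push_cast
        module
      rw [if_pos hpos]
      refine le_of_eq ?_
      show α = coinToss d α (k, -s) (k, s)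
      rw [coinToss_ne d α (fun h => coin_ne d k s h.symm)]
    · rw [if_neg h2, mul_zero]
      exact torusP_nonneg d M hα hβ _ _

theorem P_flip_bound (d M : ℕ) [NeZero M] (k : Fin d) (s : ℤˣ) (v : Torus d M)
    {α : ℝ} (hα : 0 ≤ α) (hβ : 0 ≤ 1 - (2*(d:ℝ)-1)*α) (t a : ℕ)
    (x' : TorusCoin d × Torus d M) :
    (1 - (2*(d:ℝ)-1)*α) * (if x' = flipS d M k s v (t+1) a then 1 else 0)
    ≤ torusP d M α x' (flipS d M k s v t a) := by
  by_cases h1 : x' = flipS d M k s v (t+1) a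
  · subst h1
    rw [if_pos rfl, mul_one, torusP_eq]
    have hpos : (flipS d M k s v (t+1) a).2
        = (flipS d M k s v t a).2 + dirv d M (flipS d M k s v (t+1) a).1 := by
      show v + (2 * (a : ℤ) - ((t+1 : ℕ) : ℤ)) • dirv d M (k,s)
          = (v + (2 * (a : ℤ) - (t : ℤ)) • dirv d M (k,s)) + dirv d M (k, -s)
      rw [dirv_neg]
      push_cast
      module
    rw [if_pos hpos]
    refine le_of_eq ?_
    show (1 - (2*(d:ℝ)-1)*α) = coinToss d α (k, -s) (k, -s)
    rw [coinToss_same]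
  · rw [if_neg h1, mul_zero]
    exact torusP_nonneg d M hα hβ _ _

theorem gfun_step (d M : ℕ) [NeZero M] (k : Fin d) (s : ℤˣ) (v : Torus d M)
    {α : ℝ} (hα : 0 ≤ α) (hβ : 0 ≤ 1 - (2*(d:ℝ)-1)*α) (t : ℕ)
    (x' : TorusCoin d × Torus d M) :
    gfun d M k s v α (t+1) x' ≤ ∑ x, torusP d M α x' x * gfun d M k s v α t x := by
  rw [sum_P_g]
  set β : ℝ := 1 - (2*(d:ℝ)-1)*α with hβdef
  have H1 : β^(t+1) * (if x' = stayS d M k s v (t+1) then (1:ℝ) else 0)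
      + α * β^t * (if x' = flipS d M k s v (t+1) t then (1:ℝ) else 0)
      ≤ β^t * torusP d M α x' (stayS d M k s v t) := by
    have h := P_stay_bound d M k s v hα hβ t x'
    calc β^(t+1) * (if x' = stayS d M k s v (t+1) then (1:ℝ) else 0)
        + α * β^t * (if x' = flipS d M k s v (t+1) t then (1:ℝ) else 0)
        = β^t * (β * (if x' = stayS d M k s v (t+1) then (1:ℝ) else 0)
            + α * (if x' = flipS d M k s v (t+1) t then (1:ℝ) else 0)) := by ring
      _ ≤ β^t * torusP d M α x' (stayS d M k s v t) :=
          mul_le_mul_of_nonneg_left h (pow_nonneg hβ t)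
  have H2 : α * β^t *
        (∑ a ∈ Finset.range t, if x' = flipS d M k s v (t+1) a then (1:ℝ) else 0)
      ≤ α * β^(t-1) *
        ∑ a ∈ Finset.range t, torusP d M α x' (flipS d M k s v t a) := by
    rcases Nat.eq_zero_or_pos t with h0 | h0
    · subst h0; simp
    · obtain ⟨u, rfl⟩ : ∃ u, t = u + 1 := ⟨t - 1, (Nat.succ_pred_eq_of_pos h0).symm⟩
      simp only [Nat.add_sub_cancel]
      have hsum : β * (∑ a ∈ Finset.range (u+1),
            if x' = flipS d M k s v (u+1+1) a then (1:ℝ) else 0)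
          ≤ ∑ a ∈ Finset.range (u+1), torusP d M α x' (flipS d M k s v (u+1) a) := by
        rw [Finset.mul_sum]
        exact Finset.sum_le_sum fun a _ => P_flip_bound d M k s v hα hβ (u+1) a x'
      calc α * β^(u+1) * (∑ a ∈ Finset.range (u+1),
            if x' = flipS d M k s v (u+1+1) a then (1:ℝ) else 0)
          = α * β^u * (β * ∑ a ∈ Finset.range (u+1),
            if x' = flipS d M k s v (u+1+1) a then (1:ℝ) else 0) := by ring
        _ ≤ α * β^u * ∑ a ∈ Finset.range (u+1), torusP d M α x' (flipS d M k s v (u+1) a) :=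
            mul_le_mul_of_nonneg_left hsum (by positivity)
  calc gfun d M k s v α (t+1) x'
      = (β^(t+1) * (if x' = stayS d M k s v (t+1) then (1:ℝ) else 0)
          + α * β^t * (if x' = flipS d M k s v (t+1) t then (1:ℝ) else 0))
        + α * β^t *
          (∑ a ∈ Finset.range t, if x' = flipS d M k s v (t+1) a then (1:ℝ) else 0) := by
        simp only [gfun, Nat.add_sub_cancel, Finset.sum_range_succ]
        ring
    _ ≤ β^t * torusP d M α x' (stayS d M k s v t)
        + α * β^(t-1) * ∑ a ∈ Finset.range t, torusP d M α x' (flipS d M k s v t a) :=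
        add_le_add H1 H2

theorem gfun_le_iterate (d M : ℕ) [NeZero M] (k : Fin d) (s : ℤˣ) (v : Torus d M)
    {α : ℝ} (hα : 0 ≤ α) (hβ : 0 ≤ 1 - (2*(d:ℝ)-1)*α) (t : ℕ)
    (x : TorusCoin d × Torus d M) :
    gfun d M k s v α t x
      ≤ (matVec (torusP d M α))^[t]
          (fun y => if y = ((k, s), v) then 1 else 0) x := by
  induction t generalizing x with
  | zero =>
    simp only [Function.iterate_zero, id_eq]
    have : stayS d M k s v 0 = ((k, s), v) := by
      simp [stayS]
    simp [gfun, this]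
  | succ t ih =>
    rw [Function.iterate_succ_apply']
    calc gfun d M k s v α (t+1) x
        ≤ ∑ y, torusP d M α x y * gfun d M k s v α t y :=
          gfun_step d M k s v hα hβ t x
      _ ≤ ∑ y, torusP d M α x y *
            (matVec (torusP d M α))^[t] (fun y => if y = ((k, s), v) then 1 else 0) y :=
          Finset.sum_le_sum fun y _ =>
            mul_le_mul_of_nonneg_left (ih y) (torusP_nonneg d M hα hβ _ _)
      _ = _ := rfl

theorem exp_five_lt : Real.exp (5 : ℝ) < 256 := by
  have h : Real.exp (5 : ℝ) = (Real.exp 1)^5 := by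
    rw [← Real.exp_nat_mul]; norm_num
  rw [h]
  calc (Real.exp 1)^5 ≤ 2.7182818286^5 :=
      pow_le_pow_left₀ (Real.exp_pos 1).le Real.exp_one_lt_d9.le 5
    _ < 256 := by norm_num

theorem one_div_sixteen_le_exp {r : ℝ} (hr : r ≤ 5/2) : (1:ℝ)/16 ≤ Real.exp (-r) := by
  have h1 : Real.exp (-(5/2 : ℝ)) ≤ Real.exp (-r) := Real.exp_le_exp.mpr (by linarith)
  have h2 : Real.exp ((5/2 : ℝ))^2 = Real.exp (5 : ℝ) := by
    rw [← Real.exp_nat_mul]; norm_num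
  have h3 : Real.exp ((5/2 : ℝ)) < 16 := by
    nlinarith [Real.exp_pos (5/2 : ℝ), exp_five_lt]
  have h4 : (1:ℝ)/16 ≤ Real.exp (-(5/2 : ℝ)) := by
    rw [Real.exp_neg]
    rw [div_le_iff₀ (by norm_num)]
    rw [inv_mul_eq_div, le_div_iff₀ (Real.exp_pos _)]
    linarith
  linarith

theorem exp_le_one_sub {x : ℝ} (hx : 0 < x) : Real.exp (-x) ≤ 1/(1+x) := by
  rw [Real.exp_neg, one_div]
  exact inv_anti₀ (by linarith) (by linarith [Real.add_one_le_exp x])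

theorem flip_coord (d M : ℕ) [NeZero M] (k : Fin d) (s : ℤˣ) (v : Torus d M) (a : ℕ) :
    (flipS d M k s v (2*M) a).2 k = v k + 2 * (a : ZMod M) * ((s : ℤ) : ZMod M) := by
  show (v + (2*(a:ℤ) - ((2*M : ℕ) : ℤ)) • dirv d M (k, s)) k = _
  rw [Pi.add_apply, Pi.smul_apply]
  simp only [dirv, if_true]
  rw [zsmul_eq_mul]
  push_cast [ZMod.natCast_self]
  ring

theorem count_ge (d M : ℕ) [NeZero M] (hModd : Odd M) (hM : 3 ≤ M)
    (k : Fin d) (s : ℤˣ) (v : Torus d M) (n : ZMod M) :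
    (2:ℝ) ≤ ∑ a ∈ Finset.range (2*M),
      (if (flipS d M k s v (2*M) a).2 k = n then (1:ℝ) else 0) := by
  have h2u : IsUnit (2 : ZMod M) := by
    rw [show (2 : ZMod M) = ((2:ℕ) : ZMod M) by norm_cast, ZMod.isUnit_iff_coprime]
    exact Nat.coprime_two_left.mpr hModd
  have hsu : IsUnit (((s : ℤ) : ZMod M)) := by
    rcases Int.units_eq_one_or s with h | h <;> rw [h] <;> simp
  obtain ⟨u, hu⟩ := h2u.mul hsu
  set b : ZMod M := (u⁻¹ : (ZMod M)ˣ) * (n - v k) with hb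
  have key : ∀ a : ℕ, (a : ZMod M) = b → (flipS d M k s v (2*M) a).2 k = n := by
    intro a ha
    rw [flip_coord, ha, hb]
    have h1 : (u : ZMod M) * ((u⁻¹ : (ZMod M)ˣ) : ZMod M) = 1 := u.mul_inv
    calc v k + 2 * (((u⁻¹:(ZMod M)ˣ) : ZMod M) * (n - v k)) * ((s:ℤ):ZMod M)
        = v k + ((2 * ((s:ℤ):ZMod M)) * ((u⁻¹:(ZMod M)ˣ) : ZMod M)) * (n - v k) := by ring
      _ = v k + ((u : ZMod M) * ((u⁻¹:(ZMod M)ˣ) : ZMod M)) * (n - v k) := by rw [hu]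
      _ = n := by rw [h1]; ring
  have hval : b.val < M := ZMod.val_lt b
  have hmem : ({b.val, b.val + M} : Finset ℕ) ⊆ Finset.range (2*M) := by
    intro a ha
    simp only [Finset.mem_insert, Finset.mem_singleton, Finset.mem_range] at ha ⊢
    rcases ha with rfl | rfl <;> omega
  have hne : b.val ∉ ({b.val + M} : Finset ℕ) := by
    simp only [Finset.mem_singleton]
    have : 0 < M := by omega
    omega
  have hc1 : ((b.val : ℕ) : ZMod M) = b := by
    simp [ZMod.natCast_val, ZMod.cast_id]
  have hc2 : ((b.val + M : ℕ) : ZMod M) = b := by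
    push_cast [ZMod.natCast_self]
    simp [ZMod.natCast_val, ZMod.cast_id]
  have hpair : ∑ a ∈ ({b.val, b.val + M} : Finset ℕ),
      (if (flipS d M k s v (2*M) a).2 k = n then (1:ℝ) else 0) = 2 := by
    rw [Finset.sum_insert hne, Finset.sum_singleton,
      if_pos (key b.val hc1), if_pos (key (b.val + M) hc2)]
    norm_num
  have hle := Finset.sum_le_sum_of_subset_of_nonneg hmem
    (fun i _ _ => by split_ifs <;> norm_num :
      ∀ i ∈ Finset.range (2*M), i ∉ ({b.val, b.val + M} : Finset ℕ) →
        0 ≤ (if (flipS d M k s v (2*M) i).2 k = n then (1:ℝ) else 0))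
  linarith

theorem beta_pow_ge (d M : ℕ) (hd : 1 ≤ d) (hM : 3 ≤ M) :
    (1:ℝ)/16 ≤ (1 - (2*(d:ℝ)-1)*(1/(2*(d:ℝ)*(M:ℝ))))^(2*M-1) := by
  have hm : (3:ℝ) ≤ (M:ℝ) := by exact_mod_cast hM
  have hd1 : (1:ℝ) ≤ (d:ℝ) := by exact_mod_cast hd
  have hγ0 : (0:ℝ) ≤ 1 - 1/(M:ℝ) := by
    have : 1/(M:ℝ) ≤ 1 := by
      rw [div_le_one (by linarith)]; linarith
    linarith
  have hβγ : 1 - 1/(M:ℝ) ≤ 1 - (2*(d:ℝ)-1)*(1/(2*(d:ℝ)*(M:ℝ))) := by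
    have h : (2*(d:ℝ)-1)*(1/(2*(d:ℝ)*(M:ℝ))) ≤ 1/(M:ℝ) := by
      rw [mul_one_div, div_le_div_iff₀ (by positivity) (by linarith)]
      nlinarith
    linarith
  have hm1 : (0:ℝ) < (M:ℝ) - 1 := by linarith
  have hx : (0:ℝ) < 1/((M:ℝ)-1) := by positivity
  have hexp : Real.exp (-(1/((M:ℝ)-1))) ≤ 1 - 1/(M:ℝ) := by
    have h := exp_le_one_sub hx
    have heq : 1/(1+1/((M:ℝ)-1)) = 1 - 1/(M:ℝ) := by
      have h0 : (M:ℝ) ≠ 0 := by linarith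
      have h1 : (M:ℝ) - 1 ≠ 0 := by linarith
      field_simp; ring
    rw [heq] at h
    exact h
  have hpow : Real.exp (-(((2*M-1:ℕ):ℝ) * (1/((M:ℝ)-1)))) ≤ (1 - 1/(M:ℝ))^(2*M-1) := by
    calc Real.exp (-(((2*M-1:ℕ):ℝ) * (1/((M:ℝ)-1))))
        = (Real.exp (-(1/((M:ℝ)-1))))^(2*M-1) := by
          rw [show -(((2*M-1:ℕ):ℝ) * (1/((M:ℝ)-1)))
              = ((2*M-1:ℕ):ℝ) * (-(1/((M:ℝ)-1))) by ring, Real.exp_nat_mul]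
      _ ≤ (1 - 1/(M:ℝ))^(2*M-1) := pow_le_pow_left₀ (Real.exp_pos _).le hexp _
  have hr : ((2*M-1:ℕ):ℝ) * (1/((M:ℝ)-1)) ≤ 5/2 := by
    have hcast : ((2*M-1:ℕ):ℝ) = 2*(M:ℝ) - 1 := by
      rw [Nat.cast_sub (by omega : 1 ≤ 2*M)]
      push_cast
      ring
    rw [hcast, mul_one_div, div_le_div_iff₀ (by linarith) (by norm_num)]
    linarith
  calc (1:ℝ)/16 ≤ Real.exp (-(((2*M-1:ℕ):ℝ) * (1/((M:ℝ)-1)))) :=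
      one_div_sixteen_le_exp hr
    _ ≤ (1 - 1/(M:ℝ))^(2*M-1) := hpow
    _ ≤ (1 - (2*(d:ℝ)-1)*(1/(2*(d:ℝ)*(M:ℝ))))^(2*M-1) :=
      pow_le_pow_left₀ hγ0 hβγ _

end TorusMixAux

open TorusMixAux

open scoped Classical in
/-- Single-coordinate mixing lemma: starting from a single lifted
state `((k,s),v)`, after `2M` steps of the torus lifted Markov chain the `k`-th
coordinate is uniformly mixed up to a factor `1/(16d)`: each value `n` has probability
at least `1/(16dM)`. -/
theorem torus_single_coordinate_mixing
    (d M : ℕ) [NeZero M] (hd : 1 ≤ d) (hM : 3 ≤ M) (hModd : Odd M)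
    (k : Fin d) (s : ℤˣ) (v : Torus d M) (n : ZMod M) :
    1/(16*(d : ℝ)*(M : ℝ)) ≤
      ∑ x : TorusCoin d × Torus d M,
        (if x.2 k = n then
          (matVec (torusP d M (1/(2*(d : ℝ)*(M : ℝ)))))^[2*M]
            (fun y => if y = ((k, s), v) then 1 else 0) x
        else 0) := by
  have hdR : (1:ℝ) ≤ (d:ℝ) := by exact_mod_cast hd
  have hmR : (3:ℝ) ≤ (M:ℝ) := by exact_mod_cast hM
  set α : ℝ := 1/(2*(d:ℝ)*(M:ℝ)) with hαdef
  set β : ℝ := 1 - (2*(d:ℝ)-1)*α with hβdef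
  have hα : 0 ≤ α := by rw [hαdef]; positivity
  have hβγ : (1:ℝ) - 1/(M:ℝ) ≤ β := by
    rw [hβdef, hαdef]
    have h : (2*(d:ℝ)-1)*(1/(2*(d:ℝ)*(M:ℝ))) ≤ 1/(M:ℝ) := by
      rw [mul_one_div, div_le_div_iff₀ (by positivity) (by linarith)]
      nlinarith
    linarith
  have hβ : 0 ≤ β := by
    have h1 : 1/(M:ℝ) ≤ 1 := by rw [div_le_one (by linarith)]; linarith
    linarith
  have hβ' : 0 ≤ 1 - (2*(d:ℝ)-1)*α := by rw [← hβdef]; exact hβ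
  -- Step A: the sub-solution bounds the iterated distribution pointwise.
  have hA : ∀ x : TorusCoin d × Torus d M, gfun d M k s v α (2*M) x
      ≤ (matVec (torusP d M α))^[2*M] (fun y => if y = ((k, s), v) then 1 else 0) x :=
    fun x => gfun_le_iterate d M k s v hα hβ' (2*M) x
  have hstep1 : ∑ x : TorusCoin d × Torus d M,
        (if x.2 k = n then gfun d M k s v α (2*M) x else 0)
      ≤ ∑ x : TorusCoin d × Torus d M,
        (if x.2 k = n then
          (matVec (torusP d M α))^[2*M] (fun y => if y = ((k, s), v) then 1 else 0) x
        else 0) := by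
    refine Finset.sum_le_sum fun x _ => ?_
    by_cases h : x.2 k = n
    · rw [if_pos h, if_pos h]; exact hA x
    · rw [if_neg h, if_neg h]
  -- Step B: drop the "no-flip" part of the sub-solution.
  have hdrop : ∀ x : TorusCoin d × Torus d M,
      (if x.2 k = n then α * β^(2*M-1) *
          ∑ a ∈ Finset.range (2*M),
            (if x = flipS d M k s v (2*M) a then (1:ℝ) else 0) else 0)
      ≤ (if x.2 k = n then gfun d M k s v α (2*M) x else 0) := by
    intro x
    by_cases h : x.2 k = n
    · rw [if_pos h, if_pos h]
      have h1 : (0:ℝ) ≤ (1 - (2*(d:ℝ)-1)*α)^(2*M) *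
          (if x = stayS d M k s v (2*M) then (1:ℝ) else 0) := by
        have h2 : (0:ℝ) ≤ (if x = stayS d M k s v (2*M) then (1:ℝ) else 0) := by
          split_ifs <;> norm_num
        exact mul_nonneg (pow_nonneg hβ' _) h2
      simp only [gfun]
      rw [← hβdef] at h1 ⊢
      linarith
    · rw [if_neg h, if_neg h]
  have hstep2 := Finset.sum_le_sum fun x (_ : x ∈ Finset.univ) => hdrop x
  -- Step C: swap the sums and count.
  have hswap : ∑ x : TorusCoin d × Torus d M,
      (if x.2 k = n then α * β^(2*M-1) *
          ∑ a ∈ Finset.range (2*M),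
            (if x = flipS d M k s v (2*M) a then (1:ℝ) else 0) else 0)
      = α * β^(2*M-1) * ∑ a ∈ Finset.range (2*M),
          (if (flipS d M k s v (2*M) a).2 k = n then (1:ℝ) else 0) := by
    have hx : ∀ x : TorusCoin d × Torus d M,
        (if x.2 k = n then α * β^(2*M-1) *
            ∑ a ∈ Finset.range (2*M),
              (if x = flipS d M k s v (2*M) a then (1:ℝ) else 0) else 0)
        = ∑ a ∈ Finset.range (2*M),
            (if x = flipS d M k s v (2*M) a then
              (if (flipS d M k s v (2*M) a).2 k = n then α * β^(2*M-1) else 0)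
            else 0) := by
      intro x
      by_cases h : x.2 k = n
      · rw [if_pos h, Finset.mul_sum]
        refine Finset.sum_congr rfl fun a _ => ?_
        by_cases h2 : x = flipS d M k s v (2*M) a
        · rw [if_pos h2, if_pos h2, if_pos (by rw [← h2]; exact h), mul_one]
        · rw [if_neg h2, if_neg h2, mul_zero]
      · rw [if_neg h]
        symm
        refine Finset.sum_eq_zero fun a _ => ?_
        by_cases h2 : x = flipS d M k s v (2*M) a
        · rw [if_pos h2, if_neg (fun hc => h (by rw [h2]; exact hc))]
        · rw [if_neg h2]
    rw [Finset.sum_congr rfl fun x _ => hx x, Finset.sum_comm, Finset.mul_sum]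
    refine Finset.sum_congr rfl fun a _ => ?_
    rw [Finset.sum_ite_eq' Finset.univ (flipS d M k s v (2*M) a)]
    simp only [Finset.mem_univ, if_true]
    split_ifs <;> ring
  have hcount := count_ge d M hModd hM k s v n
  have h16 : (1:ℝ)/16 ≤ β^(2*M-1) := by
    rw [hβdef, hαdef]; exact beta_pow_ge d M hd hM
  have hfinal : 1/(16*(d:ℝ)*(M:ℝ)) ≤ α * β^(2*M-1) *
      (∑ a ∈ Finset.range (2*M),
        (if (flipS d M k s v (2*M) a).2 k = n then (1:ℝ) else 0)) := by
    have hd0 : (d:ℝ) ≠ 0 := by linarith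
    have hM0 : (M:ℝ) ≠ 0 := by linarith
    have hαpos : 0 < α := by rw [hαdef]; positivity
    have hnn : 0 ≤ α * β^(2*M-1) := mul_nonneg hα (pow_nonneg hβ _)
    calc 1/(16*(d:ℝ)*(M:ℝ)) = α * (1/16) * 2 := by rw [hαdef]; field_simp
      _ ≤ α * β^(2*M-1) * 2 := by nlinarith [h16, hαpos.le]
      _ ≤ _ := mul_le_mul_of_nonneg_left hcount hnn
  linarith [hfinal, hswap, hstep2, hstep1]
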